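/- Let X, Y be two-dimensional smooth real Banach spaces with Y strictly convex. Let T : X → Y have rank 2, ‖T‖ = 1, and norm attainment set M_T = {±x}. Let y be a unit vector with x ⊥_B y, let k = ‖Ty‖ (so 0 < k < 1), and let w = Ty/‖Ty‖. If (x, Tx) is a μ-CPP with respect to (y, w) for some μ > k, then T is not an extreme contraction. -/

import Mathlib

open Metric

/-- Birkhoff-James orthogonality: `x ⊥_B y` iff `‖x + t y‖ ≥ ‖x‖` for all real `t`. -/
def BJOrth {X : Type*} [NormedAddCommGroup X] [NormedSpace ℝ X] (x y : X) : Prop :=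
  ∀ t : ℝ, ‖x‖ ≤ ‖x + t • y‖

/-- `(x, y)` is a compatible point pair with constant `(r, μ)`. -/
def IsCPPConst {X Y : Type*} [NormedAddCommGroup X] [NormedSpace ℝ X]
    [NormedAddCommGroup Y] [NormedSpace ℝ Y] (x : X) (y : Y) (r μ : ℝ) : Prop :=
  ∀ z : X, ‖z‖ = 1 → BJOrth x z → ∀ w : Y, ‖w‖ = 1 → BJOrth y w →
    ∀ a b : ℝ, ‖a • x + b • z - x‖ ≤ r → ‖a • x + b • z‖ = 1 →
      ‖a • y + (b * μ) • w‖ ≤ 1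

/-- `(x, y)` is a compatible point pair (CPP). -/
def IsCPP {X Y : Type*} [NormedAddCommGroup X] [NormedSpace ℝ X]
    [NormedAddCommGroup Y] [NormedSpace ℝ Y] (x : X) (y : Y) : Prop :=
  ∃ r > 0, ∃ μ > 0, IsCPPConst x y r μ

/-- `(x, y)` is a weakly compatible point pair (weak CPP). -/
def IsWeakCPP {X Y : Type*} [NormedAddCommGroup X] [NormedSpace ℝ X]
    [NormedAddCommGroup Y] [NormedSpace ℝ Y] (x : X) (y : Y) : Prop :=
  ∃ z : X, ‖z‖ = 1 ∧ BJOrth x z ∧ ∃ w : Y, ‖w‖ = 1 ∧ BJOrth y w ∧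
    ∃ r > 0, ∃ μ > 0, ∀ a b : ℝ, ‖a • x + b • z - x‖ ≤ r → ‖a • x + b • z‖ = 1 →
      ‖a • y + (b * μ) • w‖ ≤ 1

/-- A normed space is smooth if every unit vector has a unique supporting functional. -/
def SmoothSp (X : Type*) [NormedAddCommGroup X] [NormedSpace ℝ X] : Prop :=
  ∀ x : X, ‖x‖ = 1 → ∃! f : X →L[ℝ] ℝ, ‖f‖ = 1 ∧ f x = 1

/-- `(x, y')` is a `μ`-CPP with respect to the pair `(z, w)`. -/
def IsMuCPP {X Y : Type*} [NormedAddCommGroup X] [NormedSpace ℝ X]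
    [NormedAddCommGroup Y] [NormedSpace ℝ Y] (x : X) (y' : Y) (z : X) (w : Y) (μ : ℝ) : Prop :=
  ∃ r > 0, ∀ a b : ℝ, ‖a • x + b • z - x‖ ≤ r → ‖a • x + b • z‖ = 1 →
    ‖a • y' + (b * μ) • w‖ ≤ 1

set_option maxHeartbeats 1000000 in
theorem stmt13 {X Y : Type*} [NormedAddCommGroup X] [NormedSpace ℝ X]
    [NormedAddCommGroup Y] [NormedSpace ℝ Y] [StrictConvexSpace ℝ Y]
    [FiniteDimensional ℝ X] [FiniteDimensional ℝ Y]
    (hdX : Module.finrank ℝ X = 2) (hdY : Module.finrank ℝ Y = 2)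
    (hX : SmoothSp X) (hY : SmoothSp Y) (T : X →L[ℝ] Y) (hT : ‖T‖ = 1)
    (hrank : Module.rank ℝ (LinearMap.range (T : X →ₗ[ℝ] Y)) = 2)
    (x : X) (hx : ‖x‖ = 1) (hM : {u : X | ‖u‖ = 1 ∧ ‖T u‖ = 1} = {x, -x})
    (y : X) (hy : ‖y‖ = 1) (hxy : BJOrth x y)
    (μ : ℝ) (hμ : ‖T y‖ < μ)
    (hcpp : IsMuCPP x (T x) y ((‖T y‖)⁻¹ • T y) μ) :
    T ∉ Set.extremePoints ℝ (closedBall (0 : X →L[ℝ] Y) 1) := by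
  -- T is injective
  have hker : LinearMap.ker (T : X →ₗ[ℝ] Y) = ⊥ := by
    have hfr : Module.finrank ℝ (LinearMap.range (T : X →ₗ[ℝ] Y)) = 2 := by
      have := Module.finrank_eq_rank ℝ (LinearMap.range (T : X →ₗ[ℝ] Y))
      rw [hrank] at this
      exact_mod_cast this
    have h1 := LinearMap.finrank_range_add_finrank_ker (T : X →ₗ[ℝ] Y)
    rw [hfr, hdX] at h1
    exact Submodule.finrank_eq_zero.mp (by omega)
  have hTy0 : T y ≠ 0 := by
    intro h
    have : y ∈ LinearMap.ker (T : X →ₗ[ℝ] Y) := h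
    rw [hker] at this
    simp at this
    rw [this] at hy; simp at hy
  set k : ℝ := ‖T y‖ with hkdef
  have hk0 : 0 < k := norm_pos_iff.mpr hTy0
  have hμ0 : 0 < μ := hk0.trans hμ
  set w : Y := k⁻¹ • T y with hwdef
  have hwn : ‖w‖ = 1 := by
    rw [hwdef, norm_smul, norm_inv, Real.norm_eq_abs, abs_of_pos hk0, inv_mul_cancel₀ hk0.ne']
  have hTyw : T y = k • w := by
    rw [hwdef, smul_smul, mul_inv_cancel₀ hk0.ne', one_smul]
  obtain ⟨r, hr, hcppr⟩ := hcpp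
  -- basis
  have hind : LinearIndependent ℝ ![x, y] := by
    rw [linearIndependent_fin2]
    constructor
    · show y ≠ 0
      intro h; rw [h] at hy; simp at hy
    · show ∀ a : ℝ, a • y ≠ x
      intro a ha
      have := hxy (-a)
      rw [show x + (-a) • y = x - a • y by module, ← ha] at this
      simp only [sub_self, norm_zero] at this
      rw [ha, hx] at this
      linarith
  let B := basisOfLinearIndependentOfCardEqFinrank hind (by simp [hdX])
  have hB0 : B 0 = x := by
    rw [coe_basisOfLinearIndependentOfCardEqFinrank]; rfl
  have hB1 : B 1 = y := by
    rw [coe_basisOfLinearIndependentOfCardEqFinrank]; rfl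
  let f : X →L[ℝ] ℝ := LinearMap.toContinuousLinearMap (B.coord 1)
  have hdec : ∀ u : X, u = (B.repr u 0) • x + (B.repr u 1) • y := by
    intro u
    conv_lhs => rw [← B.sum_repr u]
    rw [Fin.sum_univ_two, hB0, hB1]
  have hfu : ∀ u : X, f u = B.repr u 1 := fun u => rfl
  -- far constant
  have hfar : ∃ c, 0 ≤ c ∧ c < 1 ∧ ∀ u : X, ‖u‖ = 1 → r ≤ ‖u - x‖ → r ≤ ‖u + x‖ → ‖T u‖ ≤ c := by
    set K : Set X := {u | ‖u‖ = 1 ∧ r ≤ ‖u - x‖ ∧ r ≤ ‖u + x‖} with hK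
    by_cases hKne : K.Nonempty
    · have hKc : IsCompact K := by
        apply Metric.isCompact_of_isClosed_isBounded
        · apply IsClosed.inter (isClosed_eq continuous_norm continuous_const)
          apply IsClosed.inter
          · exact isClosed_le continuous_const ((continuous_id.sub continuous_const).norm)
          · exact isClosed_le continuous_const ((continuous_id.add continuous_const).norm)
        · apply Bornology.IsBounded.subset (Metric.isBounded_closedBall (x := (0:X)) (r := 1))
          intro u hu
          simp [mem_closedBall_zero_iff, hu.1.le]
      obtain ⟨u₀, hu₀K, hmax⟩ := hKc.exists_isMaxOn hKne ((continuous_norm.comp T.continuous).continuousOn)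
      refine ⟨‖T u₀‖, norm_nonneg _, ?_, fun u hu1 hu2 hu3 => hmax ⟨hu1, hu2, hu3⟩⟩
      have hle : ‖T u₀‖ ≤ 1 := by
        calc ‖T u₀‖ ≤ ‖T‖ * ‖u₀‖ := T.le_opNorm u₀
        _ = 1 := by rw [hT, hu₀K.1, mul_one]
      rcases lt_or_eq_of_le hle with h | h
      · exact h
      · exfalso
        have : u₀ ∈ ({x, -x} : Set X) := by rw [← hM]; exact ⟨hu₀K.1, h⟩
        rcases this with h' | h'
        · have := hu₀K.2.1; rw [h'] at this; simp at this; linarith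
        · have := hu₀K.2.2; simp at h'; rw [h'] at this; simp at this; linarith
    · refine ⟨0, le_refl 0, one_pos, fun u h1 h2 h3 => ?_⟩
      exact ((hKne ⟨u, ⟨h1, h2, h3⟩⟩).elim)
  obtain ⟨c, hc0, hc1, hcK⟩ := hfar
  -- the perturbation
  set G : X →L[ℝ] Y := f.smulRight w with hGdef
  have hGnorm : ‖G‖ ≤ ‖f‖ := by
    rw [hGdef, ContinuousLinearMap.norm_smulRight_apply, hwn, mul_one]
  set ε : ℝ := min (min (μ - k) k) ((1 - c) / (‖f‖ + 1)) with hεdef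
  have hε0 : 0 < ε := by
    exact lt_min (lt_min (by linarith) hk0) (div_pos (by linarith) (by positivity))
  have hεμ : ε ≤ μ - k := (min_le_left _ _).trans (min_le_left _ _)
  have hεk : ε ≤ k := (min_le_left _ _).trans (min_le_right _ _)
  have hεf : ε * ‖f‖ ≤ 1 - c := by
    have h1 : ε ≤ (1 - c) / (‖f‖ + 1) := min_le_right _ _
    have h2 : ε * ‖f‖ ≤ (1 - c) / (‖f‖ + 1) * ‖f‖ :=
      mul_le_mul_of_nonneg_right h1 (norm_nonneg _)
    calc ε * ‖f‖ ≤ (1 - c) / (‖f‖ + 1) * ‖f‖ := h2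
      _ ≤ 1 - c := by
        rw [div_mul_eq_mul_div, div_le_iff₀ (by positivity)]
        nlinarith [norm_nonneg f]
  -- |a| ≤ 1 for unit vectors
  have habs : ∀ a b : ℝ, ‖a • x + b • y‖ = 1 → |a| ≤ 1 := by
    intro a b hab
    rcases eq_or_ne a 0 with h | h
    · simp [h]
    · have h0 := hxy (b / a)
      rw [hx] at h0
      have h2 : ‖a • x + b • y‖ = |a| * ‖x + (b/a) • y‖ := by
        rw [show a • x + b • y = a • (x + (b/a) • y) by
          rw [smul_add, smul_smul, mul_div_cancel₀ _ h], norm_smul, Real.norm_eq_abs]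
      rw [hab] at h2
      have h3 := mul_le_mul_of_nonneg_left h0 (abs_nonneg a)
      rw [mul_one] at h3
      linarith
  -- key near-x bound
  have hnear : ∀ δ : ℝ, 0 ≤ k + δ → k + δ ≤ μ → ∀ u : X, ‖u‖ = 1 → ‖u - x‖ ≤ r →
      ‖(T + δ • G) u‖ ≤ 1 := by
    intro δ hδ1 hδ2 u hu1 hur
    set a := B.repr u 0
    set b := B.repr u 1
    have hu : u = a • x + b • y := hdec u
    have hcu : ‖a • T x + (b * μ) • w‖ ≤ 1 := by
      apply hcppr a b
      · rw [← hu]; exact hur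
      · rw [← hu]; exact hu1
    have ha1 : |a| ≤ 1 := habs a b (by rw [← hu]; exact hu1)
    have hTx1 : ‖T x‖ ≤ 1 := by
      calc ‖T x‖ ≤ ‖T‖ * ‖x‖ := T.le_opNorm x
      _ = 1 := by rw [hT, hx, mul_one]
    have happ : (T + δ • G) u = a • T x + (b * (k + δ)) • w := by
      have h1 : T u = a • T x + (b * k) • w := by
        conv_lhs => rw [hu]
        rw [map_add, map_smul, map_smul, hTyw, smul_smul]
      have h2 : G u = b • w := by
        rw [hGdef]; simp [ContinuousLinearMap.smulRight_apply, hfu]; rfl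
      rw [ContinuousLinearMap.add_apply, ContinuousLinearMap.smul_apply, h1, h2]
      module
    rw [happ]
    set s : ℝ := (k + δ) / μ with hsdef
    have hs0 : 0 ≤ s := div_nonneg hδ1 hμ0.le
    have hs1 : s ≤ 1 := (div_le_one hμ0).mpr hδ2
    have hcomb : a • T x + (b * (k + δ)) • w
        = (1 - s) • (a • T x) + s • (a • T x + (b * μ) • w) := by
      have hsμ : s * μ = k + δ := by rw [hsdef, div_mul_cancel₀ _ hμ0.ne']
      have hsbμ : s * (b * μ) = b * (k + δ) := by
        rw [show s * (b * μ) = b * (s * μ) by ring, hsμ]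
      rw [smul_add, smul_smul s (b * μ) w, hsbμ]
      module
    rw [hcomb]
    calc ‖(1 - s) • (a • T x) + s • (a • T x + (b * μ) • w)‖
        ≤ ‖(1 - s) • (a • T x)‖ + ‖s • (a • T x + (b * μ) • w)‖ := norm_add_le _ _
      _ = (1 - s) * ‖a • T x‖ + s * ‖a • T x + (b * μ) • w‖ := by
          rw [norm_smul_of_nonneg (by linarith : (0:ℝ) ≤ 1 - s),
            norm_smul_of_nonneg hs0]
      _ ≤ (1 - s) * 1 + s * 1 := by
          apply add_le_add
          · apply mul_le_mul_of_nonneg_left _ (by linarith)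
            rw [norm_smul, Real.norm_eq_abs]
            calc |a| * ‖T x‖ ≤ 1 * 1 := mul_le_mul ha1 hTx1 (norm_nonneg _) zero_le_one
              _ = 1 := one_mul 1
          · exact mul_le_mul_of_nonneg_left hcu hs0
      _ = 1 := by ring
  -- bound on full operator norm
  have hball : ∀ δ : ℝ, |δ| ≤ ε → ‖T + δ • G‖ ≤ 1 := by
    intro δ hδ
    apply ContinuousLinearMap.opNorm_le_bound _ zero_le_one
    intro u
    rcases eq_or_ne u 0 with h | h
    · simp [h]
    · have hun : ‖u‖ ≠ 0 := norm_ne_zero_iff.mpr h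
      set v := ‖u‖⁻¹ • u with hv
      have hv1 : ‖v‖ = 1 := by
        rw [hv, norm_smul, norm_inv, norm_norm, inv_mul_cancel₀ hun]
      have hvu : (T + δ • G) u = ‖u‖ • (T + δ • G) v := by
        rw [hv, map_smul, smul_smul, mul_inv_cancel₀ hun, one_smul]
      have hδk : 0 ≤ k + δ := by
        have := abs_le.mp hδ; linarith [hεk]
      have hδμ : k + δ ≤ μ := by
        have := abs_le.mp hδ; linarith [hεμ]
      have key : ‖(T + δ • G) v‖ ≤ 1 := by
        by_cases h1 : ‖v - x‖ ≤ r
        · exact hnear δ hδk hδμ v hv1 h1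
        by_cases h2 : ‖v + x‖ ≤ r
        · have := hnear δ hδk hδμ (-v) (by rw [norm_neg]; exact hv1)
            (by rw [show -v - x = -(v + x) by module, norm_neg]; exact h2)
          rw [map_neg, norm_neg] at this
          exact this
        push_neg at h1 h2
        calc ‖(T + δ • G) v‖ = ‖T v + δ • G v‖ := by
              rw [ContinuousLinearMap.add_apply, ContinuousLinearMap.smul_apply]
          _ ≤ ‖T v‖ + ‖δ • G v‖ := norm_add_le _ _
          _ ≤ c + |δ| * ‖G‖ := by
              apply add_le_add (hcK v hv1 h1.le h2.le)
              rw [norm_smul, Real.norm_eq_abs]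
              apply mul_le_mul_of_nonneg_left _ (abs_nonneg δ)
              calc ‖G v‖ ≤ ‖G‖ * ‖v‖ := G.le_opNorm v
                _ = ‖G‖ := by rw [hv1, mul_one]
          _ ≤ 1 := by
              have h3 : |δ| * ‖G‖ ≤ ε * ‖f‖ :=
                mul_le_mul hδ hGnorm (norm_nonneg _) hε0.le
              linarith
      calc ‖(T + δ • G) u‖ = ‖u‖ * ‖(T + δ • G) v‖ := by rw [hvu, norm_smul, norm_norm]
        _ ≤ ‖u‖ * 1 := mul_le_mul_of_nonneg_left key (norm_nonneg u)
        _ = 1 * ‖u‖ := by ring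
  -- conclude
  intro hext
  rw [mem_extremePoints] at hext
  have h1 : T + ε • G ∈ closedBall (0 : X →L[ℝ] Y) 1 := by
    rw [mem_closedBall_zero_iff]
    exact hball ε (by rw [abs_of_pos hε0])
  have h2 : T - ε • G ∈ closedBall (0 : X →L[ℝ] Y) 1 := by
    rw [mem_closedBall_zero_iff]
    have := hball (-ε) (by rw [abs_neg, abs_of_pos hε0])
    rw [neg_smul] at this
    rw [sub_eq_add_neg]
    exact this
  have h3 : T ∈ openSegment ℝ (T + ε • G) (T - ε • G) := by
    refine ⟨1/2, 1/2, by norm_num, by norm_num, by norm_num, ?_⟩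
    module
  have h4 := (hext.2 _ h1 _ h2 h3).1
  have h6 : T y + (ε • G) y = T y := by
    rw [← ContinuousLinearMap.add_apply, h4]
  have h7 : (ε • G) y = 0 := by
    have := add_eq_left.mp h6
    exact this
  have h8 : (ε • G) y = ε • w := by
    rw [ContinuousLinearMap.smul_apply, hGdef]
    have hfy : f y = 1 := by
      rw [hfu, ← hB1, B.repr_self]; simp
    rw [ContinuousLinearMap.smulRight_apply, hfy, one_smul]
  rw [h8] at h7
  rcases smul_eq_zero.mp h7 with h | h
  · exact hε0.ne' h
  · rw [h] at hwn; simp at hwn
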